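/- General loss bound: let the losses be time- and history-dependent with values l^t_{x_t y_t}(x_{<t}) ∈ [l_min, l_min + l_Δ], where l_Δ > 0. Then for every n ≥ 1, 0 ≤ L_{nΛξ} − L_{nΛμ} ≤ l_Δ H_n + √(4 (L_{nΛμ} − n l_min) l_Δ H_n + l_Δ² H_n²), where H_n ≤ ln(1/w_μ). -/

import Mathlib

open Finset Filter

/-- Quantitative lower bound on binary KL divergence via strong convexity. -/
lemma klLB (p q V : ℝ) (hp0 : 0 ≤ p) (hpq : p < q) (hq1 : q < 1) (hV0 : 0 < V)
    (hV : ∀ t ∈ Set.Icc p q, t * (1 - t) ≤ V) :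
    (q - p)^2 / (2*V) ≤ p * Real.log (p/q) + (1-p) * Real.log ((1-p)/(1-q)) := by
  have hq0 : 0 < q := lt_of_le_of_lt hp0 hpq
  have hp1 : p < 1 := hpq.trans hq1
  set F : ℝ → ℝ := fun x => p * (Real.log p - Real.log x)
      + (1-p) * (Real.log (1-p) - Real.log (1-x)) - (x-p)^2/(2*V) with hF
  have hIoo : interior (Set.Icc p q) = Set.Ioo p q := interior_Icc
  have hlog1 : ContinuousOn (fun x : ℝ => p * (Real.log p - Real.log x)) (Set.Icc p q) := by
    rcases eq_or_lt_of_le hp0 with h0 | hpos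
    · refine (continuousOn_const (c := (0:ℝ))).congr ?_
      intro x hx; simp [← h0]
    · refine ContinuousOn.mul continuousOn_const ?_
      refine ContinuousOn.sub continuousOn_const ?_
      refine Real.continuousOn_log.mono ?_
      intro x hx
      exact ne_of_gt (lt_of_lt_of_le hpos hx.1)
  have hlog2 : ContinuousOn (fun x : ℝ => (1-p) * (Real.log (1-p) - Real.log (1-x)))
      (Set.Icc p q) := by
    refine ContinuousOn.mul continuousOn_const ?_
    refine ContinuousOn.sub continuousOn_const ?_
    refine (Real.continuousOn_log.comp (by fun_prop) ?_)
    intro x hx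
    have : x < 1 := lt_of_le_of_lt hx.2 hq1
    simp only [Set.mem_compl_iff, Set.mem_singleton_iff]
    intro h; nlinarith [h]
  have hderiv : ∀ x ∈ Set.Ioo p q, HasDerivAt F
      (-(p / x) + (1-p)/(1-x) - (x-p)/V) x := by
    intro x hx
    have hx0 : 0 < x := lt_of_le_of_lt hp0 hx.1
    have hx1 : x < 1 := lt_of_lt_of_le hx.2 hq1.le
    have h1 : HasDerivAt (fun x : ℝ => p * (Real.log p - Real.log x)) (p * (0 - x⁻¹)) x := by
      exact ((hasDerivAt_const x (Real.log p)).sub (Real.hasDerivAt_log hx0.ne')).const_mul p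
    have hinner : HasDerivAt (fun x : ℝ => 1 - x) (-1 : ℝ) x := by
      simpa using (hasDerivAt_id x).const_sub 1
    have h2l : HasDerivAt (fun x : ℝ => Real.log (1 - x)) ((1-x)⁻¹ * (-1)) x := by
      exact (Real.hasDerivAt_log (by linarith)).comp x hinner
    have h2 : HasDerivAt (fun x : ℝ => (1-p) * (Real.log (1-p) - Real.log (1-x)))
        ((1-p) * (0 - (1-x)⁻¹ * (-1))) x := by
      exact ((hasDerivAt_const x (Real.log (1-p))).sub h2l).const_mul (1-p)
    have h3 : HasDerivAt (fun x : ℝ => (x-p)^2/(2*V)) ((2*(x-p)^1*1)/(2*V)) x := by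
      exact (((hasDerivAt_id x).sub_const p).pow 2).div_const (2*V)
    have := (h1.add h2).sub h3
    refine this.congr_deriv ?_
    have hone : (1:ℝ)-x ≠ 0 := by linarith
    ring
  have mono : MonotoneOn F (Set.Icc p q) := by
    apply monotoneOn_of_deriv_nonneg (convex_Icc p q)
    · exact ((hlog1.add hlog2).sub (by fun_prop))
    · intro x hx
      rw [hIoo] at hx
      exact (hderiv x hx).differentiableAt.differentiableWithinAt
    · intro x hx
      rw [hIoo] at hx
      rw [(hderiv x hx).deriv]
      have hx0 : 0 < x := lt_of_le_of_lt hp0 hx.1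
      have hx1 : x < 1 := lt_of_lt_of_le hx.2 hq1.le
      have hxp : 0 ≤ x - p := by linarith [hx.1]
      have hxV : x * (1-x) ≤ V := hV x ⟨hx.1.le, hx.2.le⟩
      have hx01 : 0 < x * (1-x) := by nlinarith
      have hone : (1:ℝ)-x ≠ 0 := by linarith
      have e1 : -(p / x) + (1-p)/(1-x) = (x-p)/(x*(1-x)) := by
        field_simp
        ring
      rw [e1]
      have : (x-p)/V ≤ (x-p)/(x*(1-x)) := by
        exact div_le_div_of_nonneg_left hxp hx01 hxV
      linarith
  have hFpq : F p ≤ F q := mono ⟨le_refl p, hpq.le⟩ ⟨hpq.le, le_refl q⟩ hpq.le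
  have hFp : F p = 0 := by simp [hF]
  have e2 : p * Real.log (p/q) = p * (Real.log p - Real.log q) := by
    rcases eq_or_lt_of_le hp0 with h0 | hpos
    · simp [← h0]
    · rw [Real.log_div hpos.ne' hq0.ne']
  have e3 : (1-p) * Real.log ((1-p)/(1-q)) = (1-p) * (Real.log (1-p) - Real.log (1-q)) := by
    rw [Real.log_div (by linarith) (by linarith)]
  rw [e2, e3]
  have := hFp ▸ hFpq
  simp only [hF] at this
  linarith [this]

lemma kl_nonneg (p q : ℝ) (hp0 : 0 ≤ p) (hp1 : p ≤ 1) (hq0 : 0 ≤ q) (hq1 : q ≤ 1)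
    (hd0 : 0 < p → 0 < q) (hd1 : p < 1 → q < 1) :
    0 ≤ p * Real.log (p/q) + (1-p) * Real.log ((1-p)/(1-q)) := by
  have htriv : ∀ a : ℝ, a * Real.log (a/a) = 0 := by
    intro a
    rcases eq_or_ne a 0 with h | h
    · simp [h]
    · simp [div_self h]
  have hVone : ∀ t ∈ Set.Icc (0:ℝ) 1, t * (1 - t) ≤ 1 := by
    intro t ht; nlinarith [ht.1, ht.2]
  rcases lt_trichotomy p q with h | h | h
  · have hq1' : q < 1 := hd1 (lt_of_lt_of_le h hq1)
    have := klLB p q 1 hp0 h hq1' one_pos (fun t ht =>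
      hVone t ⟨le_trans hp0 ht.1, le_trans ht.2 hq1⟩)
    nlinarith [this, sq_nonneg (q-p)]
  · subst h
    rw [htriv p]
    have : (1-p) * Real.log ((1-p)/(1-p)) = 0 := htriv (1-p)
    linarith [this]
  · have hq0' : 0 < q := hd0 (lt_of_le_of_lt hq0 h)
    have := klLB (1-p) (1-q) 1 (by linarith) (by linarith) (by linarith) one_pos
      (fun t ht => hVone t ⟨by linarith [ht.1], by linarith [ht.2]⟩)
    rw [sub_sub_cancel, sub_sub_cancel] at this
    nlinarith [this, sq_nonneg (q-p)]

set_option maxHeartbeats 1000000 in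
/-- Core per-step inequality, asymmetric case `p < q`. -/
lemma core_ineq (p q α b : ℝ) (hp0 : 0 ≤ p) (hpq : p < q) (hq1 : q < 1)
    (hα0 : 0 < α) (hα1 : α ≤ 1) (hb0 : 0 ≤ b) (hb1 : b ≤ 1)
    (hcon : (1-q) * α ≤ q * b) (hs : 0 < (1-p)*α - p*b) :
    ((1-p)*α - p*b)^2 ≤
      2 * (p * Real.log (p/q) + (1-p) * Real.log ((1-p)/(1-q))) * ((1-p)*α + p*b) := by
  have hq0 : 0 < q := lt_of_le_of_lt hp0 hpq
  have hp1 : p < 1 := hpq.trans hq1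
  set s : ℝ := (1-p)*α - p*b with hsdef
  set W : ℝ := (1-p)*α + p*b with hWdef
  set D : ℝ := p * Real.log (p/q) + (1-p) * Real.log ((1-p)/(1-q)) with hDdef
  have hW0 : 0 < W := by
    have : 0 ≤ p*b := mul_nonneg hp0 hb0
    simp only [hWdef]; nlinarith
  have hqs : q * s ≤ α * (q-p) := by
    have := mul_le_mul_of_nonneg_left hcon hp0
    simp only [hsdef]; nlinarith
  have hqspos : 0 < q * s := mul_pos hq0 hs
  have h1 : (q*s)^2 ≤ (α*(q-p))^2 := by nlinarith [hqs, hqspos]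
  have hqp0 : 0 < q - p := by linarith
  obtain ⟨V, hV0, hVic, hVs⟩ : ∃ V:ℝ, 0 < V ∧ (∀ t ∈ Set.Icc p q, t*(1-t) ≤ V) ∧
      V * s^2 ≤ (q-p)^2 * W := by
    rcases le_or_gt q (1/2 : ℝ) with hhalf | hhalf
    · refine ⟨q*(1-q), mul_pos hq0 (by linarith), ?_, ?_⟩
      · intro t ht; nlinarith [ht.1, ht.2]
      · have hbα : b*α ≤ W := by
          simp only [hWdef]
          nlinarith [mul_nonneg (mul_nonneg (by linarith : (0:ℝ) ≤ 1-p) hα0.le)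
              (by linarith : (0:ℝ) ≤ 1-b),
            mul_nonneg (mul_nonneg hp0 hb0) (by linarith : (0:ℝ) ≤ 1-α)]
        have h2 : (1-q)*α^2 ≤ q*W := by
          nlinarith [mul_le_mul_of_nonneg_right hcon hα0.le,
            mul_le_mul_of_nonneg_left hbα hq0.le]
        have h3 : q * (q*(1-q)*s^2) ≤ q * ((q-p)^2 * W) := by
          nlinarith [mul_le_mul_of_nonneg_left h1 (by linarith : (0:ℝ) ≤ 1-q),
            mul_le_mul_of_nonneg_left h2 (sq_nonneg (q-p))]
        exact le_of_mul_le_mul_left h3 hq0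
    · rcases le_or_gt p (1/2 : ℝ) with hph | hph
      · refine ⟨1/4, by norm_num, ?_, ?_⟩
        · intro t ht; nlinarith [sq_nonneg (2*t-1)]
        · have h3 : 1/4 ≤ q*(q + p*(1-2*q)) := by
            have hin : (0:ℝ) ≤ q + 1/2 - 2*p*q := by
              nlinarith [mul_nonneg (by linarith : (0:ℝ) ≤ 1-2*p) hq0.le]
            nlinarith [mul_nonneg (by linarith : (0:ℝ) ≤ 2*q-1) hin]
          have h5 : α * (q*(q + p*(1-2*q))) ≤ q^2 * W := by
            simp only [hWdef]
            nlinarith [mul_le_mul_of_nonneg_left hcon (mul_nonneg hq0.le hp0)]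
          have hαsq : α^2 ≤ α := by nlinarith
          have h6 : q^2 * ((1/4) * s^2) ≤ q^2 * ((q-p)^2 * W) := by
            calc q^2 * ((1/4) * s^2) = (1/4) * (q*s)^2 := by ring
              _ ≤ (1/4) * (α*(q-p))^2 := mul_le_mul_of_nonneg_left h1 (by norm_num)
              _ = (q-p)^2 * (α^2 * (1/4)) := by ring
              _ ≤ (q-p)^2 * (α * (1/4)) := by
                  have := mul_le_mul_of_nonneg_right hαsq (by norm_num : (0:ℝ) ≤ 1/4)
                  exact mul_le_mul_of_nonneg_left this (sq_nonneg _)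
              _ ≤ (q-p)^2 * (α * (q*(q + p*(1-2*q)))) := by
                  have := mul_le_mul_of_nonneg_left h3 hα0.le
                  exact mul_le_mul_of_nonneg_left this (sq_nonneg _)
              _ ≤ (q-p)^2 * (q^2 * W) := mul_le_mul_of_nonneg_left h5 (sq_nonneg _)
              _ = q^2 * ((q-p)^2 * W) := by ring
          exact le_of_mul_le_mul_left h6 (by positivity)
      · refine ⟨p*(1-p), mul_pos (by linarith) (by linarith), ?_, ?_⟩
        · intro t ht; nlinarith [ht.1, ht.2]
        · have hψ : p*(1-p) ≤ q*(q + p - 2*p*q) := by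
            nlinarith [sq_nonneg (q-p),
              mul_nonneg (mul_nonneg hp0 (by linarith : (0:ℝ) ≤ 2*q-1))
                (by linarith : (0:ℝ) ≤ 1-q)]
          have hqpp : (0:ℝ) ≤ q + p - 2*p*q := by
            nlinarith [mul_nonneg (by linarith : (0:ℝ) ≤ 2*p-1) (by linarith : (0:ℝ) ≤ 1-q)]
          have h4 : α*(q + p - 2*p*q) ≤ q*W := by
            simp only [hWdef]
            nlinarith [mul_le_mul_of_nonneg_left hcon hp0]
          have h5 : p*(1-p)*α^2 ≤ q^2*W := by
            calc p*(1-p)*α^2 ≤ (q*(q + p - 2*p*q))*α^2 :=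
                  mul_le_mul_of_nonneg_right hψ (sq_nonneg α)
              _ ≤ (q*(q + p - 2*p*q))*α := by
                  have hc : (0:ℝ) ≤ q*(q + p - 2*p*q) := mul_nonneg hq0.le hqpp
                  nlinarith [mul_le_mul_of_nonneg_left (by nlinarith : α^2 ≤ α) hc]
              _ = q*(α*(q + p - 2*p*q)) := by ring
              _ ≤ q*(q*W) := mul_le_mul_of_nonneg_left h4 hq0.le
              _ = q^2*W := by ring
          have h6 : q^2 * ((p*(1-p)) * s^2) ≤ q^2 * ((q-p)^2 * W) := by
            calc q^2 * ((p*(1-p)) * s^2) = (p*(1-p)) * (q*s)^2 := by ring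
              _ ≤ (p*(1-p)) * (α*(q-p))^2 :=
                  mul_le_mul_of_nonneg_left h1 (by nlinarith : (0:ℝ) ≤ p*(1-p))
              _ = (q-p)^2 * (p*(1-p)*α^2) := by ring
              _ ≤ (q-p)^2 * (q^2*W) := mul_le_mul_of_nonneg_left h5 (sq_nonneg _)
              _ = q^2 * ((q-p)^2 * W) := by ring
          exact le_of_mul_le_mul_left h6 (by positivity)
  have hD := klLB p q V hp0 hpq hq1 hV0 hVic
  have h6 : (q-p)^2 ≤ 2*V*D := by
    rw [div_le_iff₀ (by positivity)] at hD
    rw [← hDdef] at hD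
    nlinarith [hD]
  have h7 : V * s^2 ≤ V * (2*D*W) := by
    nlinarith [mul_le_mul_of_nonneg_right h6 hW0.le, hVs]
  exact le_of_mul_le_mul_left h7 hV0

set_option maxHeartbeats 1000000 in
/-- Half of the per-step inequality (the case `B < A`). -/
lemma half_case (p q A B W : ℝ) (hp0 : 0 ≤ p) (hp1 : p ≤ 1) (hq0 : 0 ≤ q) (hq1 : q ≤ 1)
    (hd1 : p < 1 → q < 1) (hA1 : A ≤ 1) (hBm : -1 ≤ B)
    (hcon : (1-q)*A + q*B ≤ 0) (hs : 0 < (1-p)*A + p*B) (hAB : B < A)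
    (hW : (1-p)*A - p*B ≤ W) :
    ((1-p)*A + p*B)^2 ≤ 2*(p*Real.log (p/q) + (1-p)*Real.log ((1-p)/(1-q)))*W := by
  have hpAB : 0 ≤ p*(A-B) := mul_nonneg hp0 (by linarith)
  have hα0 : 0 < A := by nlinarith [hs, hpAB]
  have hpq : p < q := by
    by_contra hc
    push_neg at hc
    nlinarith [hs, hcon, mul_nonneg (sub_nonneg.2 hc) (by linarith : (0:ℝ) ≤ A - B)]
  have hq0' : 0 < q := lt_of_le_of_lt hp0 hpq
  have hq1' : q < 1 := hd1 (lt_of_lt_of_le hpq hq1)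
  have hqB : q*B ≤ 0 := by
    nlinarith [hcon, mul_nonneg (by linarith : (0:ℝ) ≤ 1-q) hα0.le]
  have hB0 : B ≤ 0 := by
    by_contra hB
    push_neg at hB
    nlinarith [mul_pos hq0' hB, hqB]
  have hcore := core_ineq p q A (-B) hp0 hpq hq1' hα0 hA1
    (by linarith) (by linarith)
    (by nlinarith [hcon]) (by nlinarith [hs])
  have hcore' : ((1-p)*A + p*B)^2 ≤
      2*(p*Real.log (p/q) + (1-p)*Real.log ((1-p)/(1-q)))*((1-p)*A - p*B) := by
    rw [show ((1-p)*A + p*B) = ((1-p)*A - p*(-B)) from by ring,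
      show ((1-p)*A - p*B) = ((1-p)*A + p*(-B)) from by ring]
    exact hcore
  have hW₀pos : 0 < (1-p)*A - p*B := by nlinarith [hs, mul_nonneg hp0 (neg_nonneg.2 hB0)]
  have hDpos : 0 ≤ 2*(p*Real.log (p/q) + (1-p)*Real.log ((1-p)/(1-q))) := by
    nlinarith [hcore', hW₀pos, sq_nonneg ((1-p)*A + p*B), hs, sq_nonneg ((1-p)*A - p*B)]
  calc ((1-p)*A + p*B)^2 ≤
      2*(p*Real.log (p/q) + (1-p)*Real.log ((1-p)/(1-q)))*((1-p)*A - p*B) := hcore'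
    _ ≤ 2*(p*Real.log (p/q) + (1-p)*Real.log ((1-p)/(1-q)))*W := by
        rcases eq_or_lt_of_le hDpos with h0 | hpos
        · rw [show (2:ℝ)*(p*Real.log (p/q) + (1-p)*Real.log ((1-p)/(1-q))) = 0 from h0.symm]
          simp
        · have h2 := mul_le_mul_of_nonneg_left hW hDpos
          linarith [h2]

set_option maxHeartbeats 1000000 in
/-- Per-step inequality in normalized variables. -/
lemma step_ineq (p q uf ut vf vt : ℝ) (hp : p ∈ Set.Icc (0:ℝ) 1) (hq : q ∈ Set.Icc (0:ℝ) 1)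
    (hd0 : 0 < p → 0 < q) (hd1 : p < 1 → q < 1)
    (huf : uf ∈ Set.Icc (0:ℝ) 1) (hut : ut ∈ Set.Icc (0:ℝ) 1)
    (hvf : vf ∈ Set.Icc (0:ℝ) 1) (hvt : vt ∈ Set.Icc (0:ℝ) 1)
    (hcon : (1-q)*(vf-uf) + q*(vt-ut) ≤ 0) :
    (1-p)*(vf-uf) + p*(vt-ut) ≤
      Real.sqrt (2 * (p * Real.log (p/q) + (1-p) * Real.log ((1-p)/(1-q)))
        * ((1-p)*(uf+vf) + p*(ut+vt))) := by
  obtain ⟨hp0, hp1⟩ := hp; obtain ⟨hq0, hq1⟩ := hq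
  rcases le_or_gt ((1-p)*(vf-uf) + p*(vt-ut)) 0 with hs | hs
  · exact le_trans hs (Real.sqrt_nonneg _)
  have hmain : ((1-p)*(vf-uf) + p*(vt-ut))^2 ≤
      2 * (p * Real.log (p/q) + (1-p) * Real.log ((1-p)/(1-q)))
        * ((1-p)*(uf+vf) + p*(ut+vt)) := by
    rcases lt_trichotomy (vt-ut) (vf-uf) with hAB | hAB | hAB
    · exact half_case p q (vf-uf) (vt-ut) _ hp0 hp1 hq0 hq1 hd1
        (by linarith [hvf.2, huf.1]) (by linarith [hvt.1, hut.2]) hcon hs hAB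
        (by nlinarith [huf.1, hvt.1, hp0, hp1])
    · exfalso
      have h1 : (1-q)*(vf-uf) + q*(vt-ut) = (1-p)*(vf-uf) + p*(vt-ut)
          + (p-q)*((vf-uf)-(vt-ut)) := by ring
      rw [← hAB] at h1
      nlinarith [hcon, hs, h1]
    · have h := half_case (1-p) (1-q) (vt-ut) (vf-uf) ((1-p)*(uf+vf) + p*(ut+vt))
        (by linarith) (by linarith) (by linarith) (by linarith)
        (fun h1 => by
          have : 0 < p := by linarith
          have := hd0 this
          linarith)
        (by linarith [hvt.2, hut.1]) (by linarith [hvf.1, huf.2])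
        (by nlinarith [hcon]) (by nlinarith [hs]) hAB
        (by nlinarith [hut.1, hvf.1, hp0, hp1])
      rw [sub_sub_cancel, sub_sub_cancel] at h
      calc ((1-p)*(vf-uf) + p*(vt-ut))^2
          = (p*(vt-ut) + (1-p)*(vf-uf))^2 := by ring
        _ ≤ 2*((1-p)*Real.log ((1-p)/(1-q)) + p*Real.log (p/q))
            *((1-p)*(uf+vf) + p*(ut+vt)) := h
        _ = 2 * (p * Real.log (p/q) + (1-p) * Real.log ((1-p)/(1-q)))
            * ((1-p)*(uf+vf) + p*(ut+vt)) := by ring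
  have hsq : (1-p)*(vf-uf) + p*(vt-ut) ≤ Real.sqrt (((1-p)*(vf-uf) + p*(vt-ut))^2) := by
    rw [Real.sqrt_sq hs.le]
  exact hsq.trans (Real.sqrt_le_sqrt hmain)

/-- From `δ ≤ √(2A(2m+δ))` conclude `δ ≤ A + √(4Am + A²)`. -/
lemma quad_step (δ A m : ℝ) (hA : 0 ≤ A) (hm : 0 ≤ m)
    (h : δ ≤ Real.sqrt (2*A*(2*m+δ))) : δ ≤ A + Real.sqrt (4*A*m + A^2) := by
  rcases le_or_gt δ A with hδ | hδ
  · have := Real.sqrt_nonneg (4*A*m + A^2); linarith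
  · have hδ0 : 0 < δ := lt_of_le_of_lt hA hδ
    have h2 : δ^2 ≤ 2*A*(2*m+δ) := by
      have hx : 0 ≤ 2*A*(2*m+δ) := by
        apply mul_nonneg (by linarith) (by linarith)
      exact (Real.le_sqrt hδ0.le hx).mp h
    have h3 : (δ-A)^2 ≤ 4*A*m + A^2 := by nlinarith [h2]
    have h4 : δ - A ≤ Real.sqrt (4*A*m + A^2) := by
      have := Real.sqrt_le_sqrt h3
      rwa [Real.sqrt_sq (by linarith : 0 ≤ δ - A)] at this
    linarith

/-- A probability distribution on finite binary strings:
nonnegative, `1` on the empty string, and additive under one-symbol extension. -/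
def IsDistr (ρ : List Bool → ℝ) : Prop :=
  (∀ x, 0 ≤ ρ x) ∧ ρ [] = 1 ∧
    ∀ x, ρ x = ρ (x ++ [false]) + ρ (x ++ [true])

/-- Conditional probability `ρ(b | x) = ρ(xb)/ρ(x)` (junk `0` when `ρ x = 0`). -/
noncomputable def condP (ρ : List Bool → ℝ) (x : List Bool) (b : Bool) : ℝ :=
  ρ (x ++ [b]) / ρ x

/-- Instantaneous relative entropy
`h_t(x) = ∑_b μ(b|x) ln (μ(b|x)/ξ(b|x))` (conventions `0·ln 0 = 0` are automatic
since `Real.log 0 = 0` and `r/0 = 0`). -/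
noncomputable def instEnt (μ ξ : List Bool → ℝ) (x : List Bool) : ℝ :=
  ∑ b : Bool, condP μ x b * Real.log (condP μ x b / condP ξ x b)

/-- Total relative entropy `H_n = ∑_{t=1}^n ∑_{x_{<t}} μ(x_{<t}) h_t(x_{<t})`
(histories of length `t-1`, i.e. length `t ∈ {0,…,n-1}`). -/
noncomputable def totalEnt (μ ξ : List Bool → ℝ) (n : ℕ) : ℝ :=
  ∑ t ∈ Finset.range n, ∑ x : Fin t → Bool,
    μ (List.ofFn x) * instEnt μ ξ (List.ofFn x)

/-- `ρ`-expected loss of predicting `y` after history `x`. -/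
noncomputable def expLoss (ρ : List Bool → ℝ) (l : Bool → Bool → ℝ)
    (x : List Bool) (y : Bool) : ℝ :=
  ∑ b : Bool, condP ρ x b * l b y

/-- `Y` is a fixed choice of minimizers for the scheme `Λ_ρ`. -/
def IsPredictor (ρ : List Bool → ℝ) (l : Bool → Bool → ℝ)
    (Y : List Bool → Bool) : Prop :=
  ∀ x y, expLoss ρ l x (Y x) ≤ expLoss ρ l x y

/-- Total `μ`-expected loss `L_{nΛ}` of the scheme with minimizers `Y`. -/
noncomputable def totalLoss (μ : List Bool → ℝ) (l : Bool → Bool → ℝ)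
    (Y : List Bool → Bool) (n : ℕ) : ℝ :=
  ∑ t ∈ Finset.range n, ∑ x : Fin t → Bool,
    μ (List.ofFn x) * expLoss μ l (List.ofFn x) (Y (List.ofFn x))

/-- `ρ`-expected loss of action `y` after history `x`, for a time- and
history-dependent loss `l` (the history `x` also encodes the time `t` via
its length). -/
noncomputable def expLossG (ρ : List Bool → ℝ) (l : List Bool → Bool → Bool → ℝ)
    (x : List Bool) (y : Bool) : ℝ :=
  ∑ b : Bool, condP ρ x b * l x b y

/-- `Y` is a fixed choice of minimizers for the scheme `Λ_ρ` with general loss. -/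
def IsPredictorG (ρ : List Bool → ℝ) (l : List Bool → Bool → Bool → ℝ)
    (Y : List Bool → Bool) : Prop :=
  ∀ x y, expLossG ρ l x (Y x) ≤ expLossG ρ l x y

/-- Total `μ`-expected loss for a general loss function. -/
noncomputable def totalLossG (μ : List Bool → ℝ) (l : List Bool → Bool → Bool → ℝ)
    (Y : List Bool → Bool) (n : ℕ) : ℝ :=
  ∑ t ∈ Finset.range n, ∑ x : Fin t → Bool,
    μ (List.ofFn x) * expLossG μ l (List.ofFn x) (Y (List.ofFn x))


lemma ofFn_snoc_eq {t : ℕ} (x : Fin t → Bool) (c : Bool) :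
    List.ofFn (Fin.snoc x c : Fin (t+1) → Bool) = List.ofFn x ++ [c] := by
  rw [List.ofFn_succ', List.concat_eq_append]
  congr 1
  · congr 1
    funext i
    simp
  · simp

/-- Summation over strings of length `t+1` by splitting off the last symbol. -/
lemma sum_snoc (g : List Bool → ℝ) (t : ℕ) :
    ∑ x : Fin (t+1) → Bool, g (List.ofFn x)
      = ∑ x : Fin t → Bool, ∑ c : Bool, g (List.ofFn x ++ [c]) := by
  rw [← (Fin.snocEquiv (fun _ => Bool)).sum_comp (fun y => g (List.ofFn y))]
  rw [Fintype.sum_prod_type]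
  rw [Finset.sum_comm]
  apply Finset.sum_congr rfl
  intro x _
  apply Finset.sum_congr rfl
  intro c _
  simp only [Fin.snocEquiv, Equiv.coe_fn_mk]
  exact congrArg g (by rw [← ofFn_snoc_eq x c])

lemma sum_mu_one (μ : List Bool → ℝ) (hμ : IsDistr μ) (t : ℕ) :
    ∑ x : Fin t → Bool, μ (List.ofFn x) = 1 := by
  induction t with
  | zero => simp [hμ.2.1]
  | succ t ih =>
    rw [sum_snoc]
    calc ∑ x : Fin t → Bool, ∑ c : Bool, μ (List.ofFn x ++ [c])
        = ∑ x : Fin t → Bool, μ (List.ofFn x) := by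
          apply Finset.sum_congr rfl
          intro x _
          rw [Fintype.sum_bool]
          linarith [hμ.2.2 (List.ofFn x)]
      _ = 1 := ih

set_option maxHeartbeats 1000000 in
lemma chain_step (μ ξ : List Bool → ℝ) (hμ : IsDistr μ)
    (hdom : ∀ y, 0 < μ y → 0 < ξ y) (x : List Bool) :
    ∑ c : Bool, μ (x++[c]) * Real.log (μ (x++[c]) / ξ (x++[c]))
      = μ x * Real.log (μ x / ξ x) + μ x * instEnt μ ξ x := by
  rcases eq_or_lt_of_le (hμ.1 x) with h0 | hpos
  · have hxf : μ (x++[false]) = 0 := by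
      have := hμ.2.2 x
      have h1 := hμ.1 (x++[false]); have h2 := hμ.1 (x++[true])
      linarith [h0.symm ▸ this]
    have hxt : μ (x++[true]) = 0 := by
      have := hμ.2.2 x
      have h1 := hμ.1 (x++[false]); have h2 := hμ.1 (x++[true])
      linarith [h0.symm ▸ this]
    rw [Fintype.sum_bool, hxf, hxt, ← h0]
    simp
  · have hξpos := hdom x hpos
    have per : ∀ c : Bool, μ (x++[c]) * Real.log (μ (x++[c]) / ξ (x++[c]))
        = μ x * condP μ x c * Real.log (μ x / ξ x)
          + μ x * (condP μ x c * Real.log (condP μ x c / condP ξ x c)) := by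
      intro c
      rcases eq_or_lt_of_le (hμ.1 (x++[c])) with hc0 | hcpos
      · have hcz : condP μ x c = 0 := by simp [condP, ← hc0]
        rw [← hc0, hcz]
        simp
      · have hξc : 0 < ξ (x++[c]) := hdom _ hcpos
        have e1 : μ (x++[c]) = μ x * condP μ x c := by
          simp only [condP]; field_simp
        have hcppos : 0 < condP μ x c := div_pos hcpos hpos
        have hqppos : 0 < condP ξ x c := div_pos hξc hξpos
        have e2 : μ (x++[c]) / ξ (x++[c]) = (μ x / ξ x) * (condP μ x c / condP ξ x c) := by
          simp only [condP]
          field_simp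
        rw [e2, Real.log_mul (by positivity) (by positivity), e1]
        ring
    rw [Fintype.sum_bool, per true, per false]
    have hsum : condP μ x false + condP μ x true = 1 := by
      simp only [condP]
      rw [← add_div, ← hμ.2.2 x, div_self hpos.ne']
    rw [instEnt, Fintype.sum_bool]
    linear_combination (μ x * Real.log (μ x / ξ x)) * hsum

lemma ent_chain (μ ξ : List Bool → ℝ) (hμ : IsDistr μ) (hξe : ξ [] = 1)
    (hdom : ∀ y, 0 < μ y → 0 < ξ y) (n : ℕ) :
    totalEnt μ ξ n
      = ∑ x : Fin n → Bool, μ (List.ofFn x) * Real.log (μ (List.ofFn x) / ξ (List.ofFn x)) := by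
  induction n with
  | zero =>
    simp [totalEnt, hμ.2.1, hξe]
  | succ n ih =>
    simp only [totalEnt] at ih ⊢
    rw [Finset.sum_range_succ, ih,
      sum_snoc (fun l => μ l * Real.log (μ l / ξ l)) n, ← Finset.sum_add_distrib]
    apply Finset.sum_congr rfl
    intro x _
    exact (chain_step μ ξ hμ hdom (List.ofFn x)).symm

lemma ent_bound (μ ξ : List Bool → ℝ) (hμ : IsDistr μ) (hξe : ξ [] = 1)
    (w₀ : ℝ) (hw0 : 0 < w₀) (hdomw : ∀ y, w₀ * μ y ≤ ξ y) (n : ℕ) :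
    totalEnt μ ξ n ≤ Real.log (1/w₀) := by
  have hdom : ∀ y, 0 < μ y → 0 < ξ y := fun y hy =>
    lt_of_lt_of_le (mul_pos hw0 hy) (hdomw y)
  rw [ent_chain μ ξ hμ hξe hdom n]
  calc ∑ x : Fin n → Bool, μ (List.ofFn x) * Real.log (μ (List.ofFn x) / ξ (List.ofFn x))
      ≤ ∑ x : Fin n → Bool, μ (List.ofFn x) * Real.log (1/w₀) := by
        apply Finset.sum_le_sum
        intro x _
        rcases eq_or_lt_of_le (hμ.1 (List.ofFn x)) with h0 | hpos
        · rw [← h0]; simp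
        · have hξp := hdom _ hpos
          apply mul_le_mul_of_nonneg_left _ hpos.le
          apply Real.log_le_log (div_pos hpos hξp)
          rw [div_le_div_iff₀ hξp hw0]
          have := hdomw (List.ofFn x)
          nlinarith [this]
    _ = Real.log (1/w₀) := by
        rw [← Finset.sum_mul, sum_mu_one μ hμ n, one_mul]

lemma condP_nonneg (ρ : List Bool → ℝ) (hρ : IsDistr ρ) (x : List Bool) (c : Bool) :
    0 ≤ condP ρ x c := div_nonneg (hρ.1 _) (hρ.1 x)

lemma condP_le_one (ρ : List Bool → ℝ) (hρ : IsDistr ρ) (x : List Bool) (c : Bool) :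
    condP ρ x c ≤ 1 := by
  rcases eq_or_lt_of_le (hρ.1 x) with h0 | hx
  · simp [condP, ← h0]
  · rw [condP, div_le_one hx]
    have := hρ.2.2 x
    have h1 := hρ.1 (x++[false]); have h2 := hρ.1 (x++[true])
    cases c
    · linarith
    · linarith

lemma condP_false_eq (ρ : List Bool → ℝ) (hρ : IsDistr ρ) (x : List Bool) (hx : 0 < ρ x) :
    condP ρ x false = 1 - condP ρ x true := by
  have hsum : condP ρ x false + condP ρ x true = 1 := by
    simp only [condP]
    rw [← add_div, ← hρ.2.2 x, div_self hx.ne']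
  linarith

set_option maxHeartbeats 2000000 in
lemma key_point (μ ξ : List Bool → ℝ) (hμ : IsDistr μ) (hξd : IsDistr ξ)
    (hdom : ∀ y, 0 < μ y → 0 < ξ y)
    (l : List Bool → Bool → Bool → ℝ) (lmin lΔ : ℝ) (hlΔ : 0 < lΔ)
    (hl : ∀ x a y, l x a y ∈ Set.Icc lmin (lmin + lΔ))
    (Yμ Yξ : List Bool → Bool)
    (hYμ : IsPredictorG μ l Yμ) (hYξ : IsPredictorG ξ l Yξ) (x : List Bool) :
    μ x * (expLossG μ l x (Yξ x) - expLossG μ l x (Yμ x)) ≤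
      lΔ * (μ x * instEnt μ ξ x) +
      Real.sqrt ((μ x * (4*lΔ*(expLossG μ l x (Yμ x) - lmin) + lΔ^2 * instEnt μ ξ x))
        * (μ x * instEnt μ ξ x)) := by
  rcases eq_or_lt_of_le (hμ.1 x) with h0 | hpos
  · rw [← h0]
    simp
  have hξpos := hdom x hpos
  set p : ℝ := condP μ x true with hpdef
  set q : ℝ := condP ξ x true with hqdef
  have cfμ : condP μ x false = 1 - p := condP_false_eq μ hμ x hpos
  have cfξ : condP ξ x false = 1 - q := condP_false_eq ξ hξd x hξpos
  have hp0 : 0 ≤ p := condP_nonneg μ hμ x true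
  have hp1 : p ≤ 1 := condP_le_one μ hμ x true
  have hq0 : 0 ≤ q := condP_nonneg ξ hξd x true
  have hq1 : q ≤ 1 := condP_le_one ξ hξd x true
  have hd0 : 0 < p → 0 < q := by
    intro hp
    have hμt : 0 < μ (x++[true]) := by
      rcases eq_or_lt_of_le (hμ.1 (x++[true])) with hh | hh
      · exfalso; rw [hpdef] at hp; simp [condP, ← hh] at hp
      · exact hh
    have := hdom _ hμt
    exact div_pos this hξpos
  have hd1 : p < 1 → q < 1 := by
    intro hp
    have hcf : 0 < condP μ x false := by rw [cfμ]; linarith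
    have hμf : 0 < μ (x++[false]) := by
      rcases eq_or_lt_of_le (hμ.1 (x++[false])) with hh | hh
      · exfalso; simp [condP, ← hh] at hcf
      · exact hh
    have := hdom _ hμf
    have : 0 < condP ξ x false := div_pos this hξpos
    rw [cfξ] at this; linarith
  set a1 : ℝ := l x false (Yμ x) with ha1
  set a2 : ℝ := l x true (Yμ x) with ha2
  set b1 : ℝ := l x false (Yξ x) with hb1
  set b2 : ℝ := l x true (Yξ x) with hb2
  have hla1 := hl x false (Yμ x); have hla2 := hl x true (Yμ x)
  have hlb1 := hl x false (Yξ x); have hlb2 := hl x true (Yξ x)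
  set uf : ℝ := (a1 - lmin)/lΔ with hufdef
  set ut : ℝ := (a2 - lmin)/lΔ with hutdef
  set vf : ℝ := (b1 - lmin)/lΔ with hvfdef
  set vt : ℝ := (b2 - lmin)/lΔ with hvtdef
  have huf : uf ∈ Set.Icc (0:ℝ) 1 :=
    ⟨div_nonneg (by linarith [hla1.1]) hlΔ.le, by rw [hufdef, div_le_one hlΔ]; linarith [hla1.2]⟩
  have hut : ut ∈ Set.Icc (0:ℝ) 1 :=
    ⟨div_nonneg (by linarith [hla2.1]) hlΔ.le, by rw [hutdef, div_le_one hlΔ]; linarith [hla2.2]⟩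
  have hvf : vf ∈ Set.Icc (0:ℝ) 1 :=
    ⟨div_nonneg (by linarith [hlb1.1]) hlΔ.le, by rw [hvfdef, div_le_one hlΔ]; linarith [hlb1.2]⟩
  have hvt : vt ∈ Set.Icc (0:ℝ) 1 :=
    ⟨div_nonneg (by linarith [hlb2.1]) hlΔ.le, by rw [hvtdef, div_le_one hlΔ]; linarith [hlb2.2]⟩
  have hconraw := hYξ x (Yμ x)
  rw [expLossG, expLossG, Fintype.sum_bool, Fintype.sum_bool, cfξ] at hconraw
  have hcon : (1-q)*(vf-uf) + q*(vt-ut) ≤ 0 := by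
    have e : (1-q)*(vf-uf) + q*(vt-ut) = ((1-q)*(b1-a1) + q*(b2-a2))/lΔ := by
      rw [hvfdef, hufdef, hvtdef, hutdef]; field_simp; try ring
    rw [e]
    apply div_nonpos_of_nonpos_of_nonneg _ hlΔ.le
    rw [← hqdef, ← ha1, ← ha2, ← hb1, ← hb2] at hconraw
    nlinarith [hconraw]
  have hE : instEnt μ ξ x = p * Real.log (p/q) + (1-p) * Real.log ((1-p)/(1-q)) := by
    simp only [instEnt, Fintype.sum_bool, cfμ, cfξ, ← hpdef, ← hqdef]
    try ring
  have hE0 : 0 ≤ instEnt μ ξ x := by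
    rw [hE]; exact kl_nonneg p q hp0 hp1 hq0 hq1 hd0 hd1
  have hstep := step_ineq p q uf ut vf vt ⟨hp0, hp1⟩ ⟨hq0, hq1⟩ hd0 hd1 huf hut hvf hvt hcon
  set eμ : ℝ := expLossG μ l x (Yμ x) with heμ
  set eξ : ℝ := expLossG μ l x (Yξ x) with heξ
  have heμ' : eμ = p*a2 + (1-p)*a1 := by
    rw [heμ, expLossG, Fintype.sum_bool, cfμ, ← hpdef, ← ha1, ← ha2]
  have heξ' : eξ = p*b2 + (1-p)*b1 := by
    rw [heξ, expLossG, Fintype.sum_bool, cfμ, ← hpdef, ← hb1, ← hb2]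
  have hδeq : eξ - eμ = lΔ * ((1-p)*(vf-uf) + p*(vt-ut)) := by
    rw [heμ', heξ', hvfdef, hufdef, hvtdef, hutdef]; field_simp; try ring
  have hWeq : (1-p)*(uf+vf) + p*(ut+vt) = (2*(eμ - lmin) + (eξ - eμ))/lΔ := by
    rw [heμ', heξ', hvfdef, hufdef, hvtdef, hutdef]; field_simp; try ring
  have hm0 : 0 ≤ eμ - lmin := by
    rw [heμ']
    nlinarith [mul_le_mul_of_nonneg_left hla2.1 hp0,
      mul_le_mul_of_nonneg_left hla1.1 (by linarith : (0:ℝ) ≤ 1-p)]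
  have hconv : eξ - eμ ≤ Real.sqrt (2*(lΔ*instEnt μ ξ x)*(2*(eμ - lmin) + (eξ - eμ))) := by
    calc eξ - eμ = lΔ * ((1-p)*(vf-uf) + p*(vt-ut)) := hδeq
      _ ≤ lΔ * Real.sqrt (2 * (p * Real.log (p/q) + (1-p) * Real.log ((1-p)/(1-q)))
            * ((1-p)*(uf+vf) + p*(ut+vt))) := mul_le_mul_of_nonneg_left hstep hlΔ.le
      _ = Real.sqrt (lΔ^2 * (2 * (p * Real.log (p/q) + (1-p) * Real.log ((1-p)/(1-q)))
            * ((1-p)*(uf+vf) + p*(ut+vt)))) := by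
          rw [Real.sqrt_mul (sq_nonneg lΔ), Real.sqrt_sq hlΔ.le]
      _ = Real.sqrt (2*(lΔ*instEnt μ ξ x)*(2*(eμ - lmin) + (eξ - eμ))) := by
          congr 1
          rw [hE, hWeq]
          field_simp
  have hquad := quad_step (eξ - eμ) (lΔ * instEnt μ ξ x) (eμ - lmin)
    (mul_nonneg hlΔ.le hE0) hm0 hconv
  have hfin := mul_le_mul_of_nonneg_left hquad hpos.le
  have hsq : μ x * Real.sqrt (4*(lΔ*instEnt μ ξ x)*(eμ - lmin) + (lΔ*instEnt μ ξ x)^2)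
      = Real.sqrt ((μ x * (4*lΔ*(eμ - lmin) + lΔ^2 * instEnt μ ξ x)) * (μ x * instEnt μ ξ x)) := by
    rw [show (μ x * (4*lΔ*(eμ - lmin) + lΔ^2 * instEnt μ ξ x)) * (μ x * instEnt μ ξ x)
        = μ x^2 * ((4*(lΔ*instEnt μ ξ x)*(eμ - lmin) + (lΔ*instEnt μ ξ x)^2)) from by ring,
      Real.sqrt_mul (sq_nonneg (μ x)), Real.sqrt_sq hpos.le]
  calc μ x * (eξ - eμ)
      ≤ μ x * (lΔ * instEnt μ ξ x + Real.sqrt (4*(lΔ*instEnt μ ξ x)*(eμ - lmin)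
          + (lΔ*instEnt μ ξ x)^2)) := hfin
    _ = lΔ * (μ x * instEnt μ ξ x)
        + Real.sqrt ((μ x * (4*lΔ*(eμ - lmin) + lΔ^2 * instEnt μ ξ x)) * (μ x * instEnt μ ξ x)) := by
        rw [mul_add, hsq]; ring

lemma instEnt_nonneg (μ ξ : List Bool → ℝ) (hμ : IsDistr μ) (hξd : IsDistr ξ)
    (hdom : ∀ y, 0 < μ y → 0 < ξ y) (x : List Bool) (hpos : 0 < μ x) :
    0 ≤ instEnt μ ξ x := by
  have hξpos := hdom x hpos
  set p : ℝ := condP μ x true with hpdef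
  set q : ℝ := condP ξ x true with hqdef
  have cfμ : condP μ x false = 1 - p := condP_false_eq μ hμ x hpos
  have cfξ : condP ξ x false = 1 - q := condP_false_eq ξ hξd x hξpos
  have hd0 : 0 < p → 0 < q := by
    intro hp
    have hμt : 0 < μ (x++[true]) := by
      rcases eq_or_lt_of_le (hμ.1 (x++[true])) with hh | hh
      · exfalso; rw [hpdef] at hp; simp [condP, ← hh] at hp
      · exact hh
    exact div_pos (hdom _ hμt) hξpos
  have hd1 : p < 1 → q < 1 := by
    intro hp
    have hcf : 0 < condP μ x false := by rw [cfμ]; linarith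
    have hμf : 0 < μ (x++[false]) := by
      rcases eq_or_lt_of_le (hμ.1 (x++[false])) with hh | hh
      · exfalso; simp [condP, ← hh] at hcf
      · exact hh
    have : 0 < condP ξ x false := div_pos (hdom _ hμf) hξpos
    rw [cfξ] at this; linarith
  have hE : instEnt μ ξ x = p * Real.log (p/q) + (1-p) * Real.log ((1-p)/(1-q)) := by
    simp only [instEnt, Fintype.sum_bool, cfμ, cfξ, ← hpdef, ← hqdef]
    try ring
  rw [hE]
  exact kl_nonneg p q (condP_nonneg μ hμ x true) (condP_le_one μ hμ x true)
    (condP_nonneg ξ hξd x true) (condP_le_one ξ hξd x true) hd0 hd1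

lemma expLossG_ge_lmin (μ : List Bool → ℝ) (hμ : IsDistr μ)
    (l : List Bool → Bool → Bool → ℝ) (lmin lΔ : ℝ)
    (hl : ∀ x a y, l x a y ∈ Set.Icc lmin (lmin + lΔ))
    (x : List Bool) (hx : 0 < μ x) (y : Bool) : lmin ≤ expLossG μ l x y := by
  have h1 := (hl x true y).1
  have h2 := (hl x false y).1
  have hp0 := condP_nonneg μ hμ x true
  have hp1 := condP_le_one μ hμ x true
  rw [expLossG, Fintype.sum_bool, condP_false_eq μ hμ x hx]
  nlinarith [mul_le_mul_of_nonneg_left h1 hp0,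
    mul_le_mul_of_nonneg_left h2 (by linarith : (0:ℝ) ≤ 1 - condP μ x true)]

set_option maxHeartbeats 2000000 in
/-- Theorem 3, general loss bound: with losses in
`[l_min, l_min + l_Δ]`, for every `n ≥ 1`,
`0 ≤ L_{nΛξ} − L_{nΛμ} ≤ l_Δ H_n + √(4(L_{nΛμ} − n l_min) l_Δ H_n + l_Δ² H_n²)`,
where `H_n ≤ ln (1/w_μ)`. -/
theorem general_loss_bound {ι : Type*} [Countable ι]
    (μs : ι → List Bool → ℝ) (w : ι → ℝ)
    (hμs : ∀ i, IsDistr (μs i)) (hw : ∀ i, 0 < w i) (hw1 : HasSum w 1)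
    (ξ : List Bool → ℝ) (hξ : ∀ x, HasSum (fun i => w i * μs i x) (ξ x))
    (i₀ : ι)
    (l : List Bool → Bool → Bool → ℝ) (lmin lΔ : ℝ) (hlΔ : 0 < lΔ)
    (hl : ∀ x a y, l x a y ∈ Set.Icc lmin (lmin + lΔ))
    (Yμ Yξ : List Bool → Bool)
    (hYμ : IsPredictorG (μs i₀) l Yμ) (hYξ : IsPredictorG ξ l Yξ)
    (n : ℕ) (hn : 1 ≤ n) :
    0 ≤ totalLossG (μs i₀) l Yξ n - totalLossG (μs i₀) l Yμ n ∧
    totalLossG (μs i₀) l Yξ n - totalLossG (μs i₀) l Yμ n ≤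
      lΔ * totalEnt (μs i₀) ξ n +
        Real.sqrt (4 * (totalLossG (μs i₀) l Yμ n - n * lmin) * lΔ * totalEnt (μs i₀) ξ n
          + lΔ ^ 2 * totalEnt (μs i₀) ξ n ^ 2) ∧
    totalEnt (μs i₀) ξ n ≤ Real.log (1 / w i₀) := by
  set μ : List Bool → ℝ := μs i₀ with hμdef
  have hμ : IsDistr μ := hμs i₀
  have hξ0 : ∀ x, 0 ≤ ξ x := fun x =>
    hasSum_le (fun i => mul_nonneg (hw i).le ((hμs i).1 x)) hasSum_zero (hξ x)
  have hξe : ξ [] = 1 := by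
    have e : (fun i => w i * μs i []) = w := by
      funext i; rw [(hμs i).2.1, mul_one]
    exact (hξ []).unique (by rw [e]; exact hw1)
  have hξa : ∀ x, ξ x = ξ (x++[false]) + ξ (x++[true]) := by
    intro x
    have e : (fun i => w i * μs i x)
        = fun i => w i * μs i (x++[false]) + w i * μs i (x++[true]) := by
      funext i; rw [(hμs i).2.2 x]; ring
    exact (hξ x).unique (by rw [e]; exact ((hξ (x++[false])).add (hξ (x++[true]))))
  have hξd : IsDistr ξ := ⟨hξ0, hξe, hξa⟩
  have hdomw : ∀ x, w i₀ * μ x ≤ ξ x := fun x =>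
    le_hasSum (hξ x) i₀ (fun j _ => mul_nonneg (hw j).le ((hμs j).1 x))
  have hdom : ∀ x, 0 < μ x → 0 < ξ x := fun x hx =>
    lt_of_lt_of_le (mul_pos (hw i₀) hx) (hdomw x)
  set S : Finset ((t : ℕ) × (Fin t → Bool)) :=
    (Finset.range n).sigma (fun t => Finset.univ) with hSdef
  have hsig : ∀ f : List Bool → ℝ,
      ∑ σ ∈ S, f (List.ofFn σ.2) = ∑ t ∈ Finset.range n, ∑ x : Fin t → Bool, f (List.ofFn x) :=
    fun f => Finset.sum_sigma _ _ _
  set E : List Bool → ℝ := instEnt μ ξ with hEdef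
  set eμf : List Bool → ℝ := fun y => expLossG μ l y (Yμ y) with heμf
  set eξf : List Bool → ℝ := fun y => expLossG μ l y (Yξ y) with heξf
  have hLμ : totalLossG μ l Yμ n = ∑ σ ∈ S, μ (List.ofFn σ.2) * eμf (List.ofFn σ.2) :=
    (hsig (fun y => μ y * eμf y)).symm
  have hLξ : totalLossG μ l Yξ n = ∑ σ ∈ S, μ (List.ofFn σ.2) * eξf (List.ofFn σ.2) :=
    (hsig (fun y => μ y * eξf y)).symm
  have hH : totalEnt μ ξ n = ∑ σ ∈ S, μ (List.ofFn σ.2) * E (List.ofFn σ.2) :=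
    (hsig (fun y => μ y * E y)).symm
  have hmu1 : ∑ σ ∈ S, μ (List.ofFn σ.2) = (n : ℝ) := by
    rw [hsig (fun y => μ y)]
    calc ∑ t ∈ Finset.range n, ∑ x : Fin t → Bool, μ (List.ofFn x)
        = ∑ t ∈ Finset.range n, (1:ℝ) := by
          exact Finset.sum_congr rfl (fun t _ => sum_mu_one μ hμ t)
      _ = n := by simp
  have conj1 : 0 ≤ totalLossG μ l Yξ n - totalLossG μ l Yμ n := by
    rw [hLμ, hLξ, ← Finset.sum_sub_distrib]
    apply Finset.sum_nonneg
    intro σ _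
    rw [← mul_sub]
    exact mul_nonneg (hμ.1 _) (sub_nonneg.2 (hYμ _ _))
  refine ⟨conj1, ?_, ent_bound μ ξ hμ hξe (w i₀) (hw i₀) hdomw n⟩
  set g : ((t : ℕ) × (Fin t → Bool)) → ℝ := fun σ =>
    μ (List.ofFn σ.2) * (4*lΔ*(eμf (List.ofFn σ.2) - lmin) + lΔ^2 * E (List.ofFn σ.2))
    with hgdef
  set h : ((t : ℕ) × (Fin t → Bool)) → ℝ := fun σ =>
    μ (List.ofFn σ.2) * E (List.ofFn σ.2) with hhdef
  have hg0 : ∀ σ, 0 ≤ g σ := by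
    intro σ
    rcases eq_or_lt_of_le (hμ.1 (List.ofFn σ.2)) with h0 | hpos
    · rw [hgdef]; simp [← h0]
    · apply mul_nonneg hpos.le
      have h1 := expLossG_ge_lmin μ hμ l lmin lΔ hl (List.ofFn σ.2) hpos (Yμ (List.ofFn σ.2))
      have h2 := instEnt_nonneg μ ξ hμ hξd hdom (List.ofFn σ.2) hpos
      have h1' : lmin ≤ eμf (List.ofFn σ.2) := h1
      have h2' : 0 ≤ E (List.ofFn σ.2) := h2
      exact add_nonneg (mul_nonneg (by positivity : (0:ℝ) ≤ 4*lΔ) (by linarith))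
        (mul_nonneg (sq_nonneg lΔ) h2')
  have hh0 : ∀ σ, 0 ≤ h σ := by
    intro σ
    rcases eq_or_lt_of_le (hμ.1 (List.ofFn σ.2)) with h0 | hpos
    · rw [hhdef]; simp [← h0]
    · exact mul_nonneg hpos.le (instEnt_nonneg μ ξ hμ hξd hdom (List.ofFn σ.2) hpos)
  have hpt : ∀ σ ∈ S, μ (List.ofFn σ.2) * eξf (List.ofFn σ.2)
      - μ (List.ofFn σ.2) * eμf (List.ofFn σ.2)
      ≤ lΔ * h σ + Real.sqrt (g σ * h σ) := by
    intro σ _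
    have hk := key_point μ ξ hμ hξd hdom l lmin lΔ hlΔ hl Yμ Yξ hYμ hYξ (List.ofFn σ.2)
    rw [mul_sub] at hk
    exact hk
  have hCS := Finset.sum_mul_sq_le_sq_mul_sq S (fun σ => Real.sqrt (g σ)) (fun σ => Real.sqrt (h σ))
  have hCS' : (∑ σ ∈ S, Real.sqrt (g σ * h σ))^2 ≤ (∑ σ ∈ S, g σ) * (∑ σ ∈ S, h σ) := by
    have e1 : ∀ σ ∈ S, Real.sqrt (g σ) * Real.sqrt (h σ) = Real.sqrt (g σ * h σ) :=
      fun σ _ => (Real.sqrt_mul (hg0 σ) (h σ)).symm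
    have e2 : ∀ σ ∈ S, Real.sqrt (g σ)^2 = g σ := fun σ _ => Real.sq_sqrt (hg0 σ)
    have e3 : ∀ σ ∈ S, Real.sqrt (h σ)^2 = h σ := fun σ _ => Real.sq_sqrt (hh0 σ)
    rw [← Finset.sum_congr rfl e1, ← Finset.sum_congr rfl e2, ← Finset.sum_congr rfl e3]
    exact hCS
  have hsgh0 : 0 ≤ ∑ σ ∈ S, Real.sqrt (g σ * h σ) :=
    Finset.sum_nonneg (fun σ _ => Real.sqrt_nonneg _)
  have hsqrt : ∑ σ ∈ S, Real.sqrt (g σ * h σ)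
      ≤ Real.sqrt ((∑ σ ∈ S, g σ) * (∑ σ ∈ S, h σ)) := by
    have := Real.sqrt_le_sqrt hCS'
    rwa [Real.sqrt_sq hsgh0] at this
  have hsum_g : ∑ σ ∈ S, g σ
      = 4*lΔ*(totalLossG μ l Yμ n - n * lmin) + lΔ^2 * totalEnt μ ξ n := by
    have e : ∀ σ ∈ S, g σ = 4*lΔ*(μ (List.ofFn σ.2) * eμf (List.ofFn σ.2))
        - 4*lΔ*lmin*(μ (List.ofFn σ.2)) + lΔ^2*(μ (List.ofFn σ.2) * E (List.ofFn σ.2)) := by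
      intro σ _; rw [hgdef]; ring
    rw [Finset.sum_congr rfl e, Finset.sum_add_distrib, Finset.sum_sub_distrib,
      ← Finset.mul_sum, ← Finset.mul_sum, ← Finset.mul_sum,
      ← hLμ, ← hH, hmu1]
    ring
  have main : totalLossG μ l Yξ n - totalLossG μ l Yμ n
      = ∑ σ ∈ S, (μ (List.ofFn σ.2) * eξf (List.ofFn σ.2)
        - μ (List.ofFn σ.2) * eμf (List.ofFn σ.2)) := by
    rw [hLξ, hLμ, ← Finset.sum_sub_distrib]
  rw [main]
  calc ∑ σ ∈ S, (μ (List.ofFn σ.2) * eξf (List.ofFn σ.2)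
        - μ (List.ofFn σ.2) * eμf (List.ofFn σ.2))
      ≤ ∑ σ ∈ S, (lΔ * h σ + Real.sqrt (g σ * h σ)) := Finset.sum_le_sum hpt
    _ = lΔ * (∑ σ ∈ S, h σ) + ∑ σ ∈ S, Real.sqrt (g σ * h σ) := by
        rw [Finset.sum_add_distrib, ← Finset.mul_sum]
    _ ≤ lΔ * totalEnt μ ξ n
        + Real.sqrt (4 * (totalLossG μ l Yμ n - n * lmin) * lΔ * totalEnt μ ξ n
          + lΔ ^ 2 * totalEnt μ ξ n ^ 2) := by
        have e4 : (∑ σ ∈ S, g σ) * (∑ σ ∈ S, h σ)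
            = 4 * (totalLossG μ l Yμ n - n * lmin) * lΔ * totalEnt μ ξ n
              + lΔ ^ 2 * totalEnt μ ξ n ^ 2 := by
          rw [hsum_g, ← hH]
          ring
        rw [← hH, ← e4]
        exact add_le_add le_rfl hsqrt
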